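/- Let p, m ≥ 1, let Q ∈ ℝ^{p×m} with rank Q = p, let L ∈ ℝ^{m×m} be lower unitriangular with Q⁰ := QL in canonical form with witnessing indices c_1,…,c_p, and let Λ₊ = diag(λ_1,…,λ_p) ∈ ℝ^{p×p} with λ_i < 0 for all i, Λ₋ ∈ ℝ^{m×m} diagonal with strictly positive diagonal entries. Set C₀ = -Λ₋^{-1} Qᵀ Λ₊ Σ and, for k ∈ {1,…,p}, ℓ(k) := min(c_p, c_{p-1}, …, c_{p-k+1}). Then for every k ∈ {1,…,p}: (a) for every ℓ ∈ {1,…,ℓ(k)-1}, ker(E⁻_ℓ C₀ E⁺_k) = ker(C₀ E⁺_k); and (b) ker(E⁻_{ℓ(k)-1} C₀ E⁺_k) is a proper subset of ker(E⁻_{ℓ(k)} C₀ E⁺_k). -/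
import Mathlib


/-- A matrix `L` is lower unitriangular if `L i j = 0` whenever `i < j`
and `L i i = 1` for every `i`. -/
def IsLowerUnitriangular {m : ℕ} (L : Matrix (Fin m) (Fin m) ℝ) : Prop :=
  (∀ i j : Fin m, i < j → L i j = 0) ∧ ∀ i : Fin m, L i i = 1

/-- `Q` is in canonical form with witnessing (distinct) column indices `c`. -/
def IsCanonicalFormWith {p m : ℕ} (Q : Matrix (Fin p) (Fin m) ℝ) (c : Fin p → Fin m) : Prop :=
  Function.Injective c ∧
    ∀ i : Fin p,
      Q i (c i) ≠ 0 ∧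
      (∀ j : Fin m, c i < j → (∀ k : Fin p, i < k → j ≠ c k) → Q i j = 0) ∧
      (∀ j : Fin m, j < c i → Q i j = 0)

/-- The antidiagonal permutation matrix `Σ ∈ ℝ^{p×p}`: the (1-indexed) entry `(i,j)`
equals `1` if `i + j = p + 1` and `0` otherwise. -/
def SigmaMat (p : ℕ) : Matrix (Fin p) (Fin p) ℝ :=
  Matrix.of fun i j => if (i : ℕ) + (j : ℕ) + 1 = p then 1 else 0

/-- `E⁻_ℓ ∈ ℝ^{m×m}`: diagonal matrix whose first `ℓ` diagonal entries are `0`,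
the rest being `1`. -/
def Eminus (m : ℕ) (l : ℕ) : Matrix (Fin m) (Fin m) ℝ :=
  Matrix.diagonal fun i => if (i : ℕ) < l then 0 else 1

/-- `E⁺_k ∈ ℝ^{p×p}`: diagonal matrix whose first `k` diagonal entries are `1`,
the rest being `0`. -/
def Eplus (p : ℕ) (k : ℕ) : Matrix (Fin p) (Fin p) ℝ :=
  Matrix.diagonal fun i => if (i : ℕ) < k then 1 else 0

/-- `C₀ = -Λ₋⁻¹ Qᵀ Λ₊ Σ`, where `Λ₊ = diag lam` and `Λ₋ = diag mu`. -/
noncomputable def C0mat {p m : ℕ} (Q : Matrix (Fin p) (Fin m) ℝ)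
    (lam : Fin p → ℝ) (mu : Fin m → ℝ) : Matrix (Fin m) (Fin p) ℝ :=
  -((Matrix.diagonal fun j => (mu j)⁻¹) * Q.transpose * Matrix.diagonal lam * SigmaMat p)

/-- `ℓ(k) = min (c_p, …, c_{p-k+1})` where the `c_r` are taken as 1-indexed column
values: the minimum of `(c r) + 1` over the (0-indexed) rows `r` with `p - k ≤ r`. -/
noncomputable def ellOf {p m : ℕ} (c : Fin p → Fin m) (k : ℕ) : ℕ :=
  sInf {n : ℕ | ∃ r : Fin p, p - k ≤ (r : ℕ) ∧ (c r : ℕ) + 1 = n}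

lemma vecMul_tri_zero_iff {m : ℕ} {L : Matrix (Fin m) (Fin m) ℝ}
    (hL : IsLowerUnitriangular L) (x : Fin m → ℝ) (l : ℕ) :
    (∀ j : Fin m, l ≤ (j : ℕ) → Matrix.vecMul x L j = 0) ↔
      (∀ j : Fin m, l ≤ (j : ℕ) → x j = 0) := by
  constructor
  · intro h
    suffices H : ∀ t, ∀ j : Fin m, m ≤ (j : ℕ) + t → l ≤ (j : ℕ) → x j = 0 by
      intro j hj; exact H m j (by omega) hj
    intro t
    induction t with
    | zero => intro j hj _; exact absurd j.isLt (by omega)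
    | succ t ih =>
      intro j hjt hj
      have hy := h j hj
      rw [Matrix.vecMul, dotProduct, Finset.sum_eq_single j] at hy
      · rwa [hL.2 j, mul_one] at hy
      · intro b _ hb
        rcases lt_or_gt_of_ne hb with h1 | h1
        · rw [hL.1 b j h1, mul_zero]
        · have hb' : (j : ℕ) < (b : ℕ) := h1
          rw [ih b (by omega) (by omega), zero_mul]
      · intro hj'; exact absurd (Finset.mem_univ j) hj'
  · intro h j hj
    rw [Matrix.vecMul, dotProduct]
    apply Finset.sum_eq_zero
    intro b _
    rcases lt_trichotomy b j with h1 | h1 | h1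
    · rw [hL.1 b j h1, mul_zero]
    · subst h1; rw [h b hj, zero_mul]
    · rw [h b (le_trans hj (le_of_lt h1)), zero_mul]

lemma canonical_row_support {p m : ℕ} {Q0 : Matrix (Fin p) (Fin m) ℝ} {c : Fin p → Fin m}
    (hc : IsCanonicalFormWith Q0 c) (i : Fin p) (j : Fin m)
    (h : ∀ r : Fin p, i ≤ r → j ≠ c r) : Q0 i j = 0 := by
  obtain ⟨h1, h2, h3⟩ := hc.2 i
  rcases lt_trichotomy j (c i) with hlt | heq | hgt
  · exact h3 j hlt
  · exact absurd heq (h i le_rfl)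
  · exact h2 j hgt (fun r hr => h r hr.le)

lemma eminus_zero (m : ℕ) : Eminus m 0 = 1 := by
  unfold Eminus
  simp [Matrix.diagonal_one]

lemma entry_formula {p m : ℕ} (Q : Matrix (Fin p) (Fin m) ℝ)
    (lam : Fin p → ℝ) (mu : Fin m → ℝ) (l k : ℕ) (j : Fin m) (i : Fin p) :
    (Eminus m l * C0mat Q lam mu * Eplus p k) j i =
      (if (j : ℕ) < l then 0 else 1) *
        (-((mu j)⁻¹ * Q i.rev j * lam i.rev)) * (if (i : ℕ) < k then 1 else 0) := by
  have hC : C0mat Q lam mu j i = -((mu j)⁻¹ * Q i.rev j * lam i.rev) := by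
    rw [C0mat, Matrix.neg_apply, Matrix.mul_apply]
    have hterm : ∀ s : Fin p,
        ((Matrix.diagonal fun j => (mu j)⁻¹) * Q.transpose * Matrix.diagonal lam) j s *
          SigmaMat p s i = if s = i.rev then (mu j)⁻¹ * Q s j * lam s else 0 := by
      intro s
      rw [Matrix.mul_diagonal, Matrix.mul_apply]
      have : (∑ t, Matrix.diagonal (fun j => (mu j)⁻¹) j t * Q.transpose t s) =
          (mu j)⁻¹ * Q s j := by
        rw [Finset.sum_eq_single j]
        · rw [Matrix.diagonal_apply_eq, Matrix.transpose_apply]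
        · intro b _ hb; rw [Matrix.diagonal_apply_ne _ (Ne.symm hb), zero_mul]
        · intro hj; exact absurd (Finset.mem_univ j) hj
      rw [this]
      have hiff : ((s : ℕ) + (i : ℕ) + 1 = p) ↔ s = i.rev := by
        rw [Fin.ext_iff, Fin.val_rev]
        omega
      simp only [SigmaMat, Matrix.of_apply, hiff, mul_ite, mul_one, mul_zero]
    rw [Finset.sum_congr rfl (fun s _ => hterm s), Finset.sum_ite_eq' Finset.univ i.rev]
    simp
  rw [Eminus, Eplus, Matrix.mul_diagonal, Matrix.diagonal_mul, hC]

lemma kernel_iff {p m : ℕ} (Q : Matrix (Fin p) (Fin m) ℝ)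
    (L : Matrix (Fin m) (Fin m) ℝ) (hL : IsLowerUnitriangular L)
    (lam : Fin p → ℝ) (mu : Fin m → ℝ) (hmu : ∀ j, 0 < mu j)
    (k l : ℕ) (hk2 : k ≤ p) (w : Fin p → ℝ) :
    (Eminus m l * C0mat Q lam mu * Eplus p k).mulVec w = 0 ↔
      ∀ j : Fin m, l ≤ (j : ℕ) →
        Matrix.vecMul (fun r : Fin p => if p - k ≤ (r : ℕ) then lam r * w r.rev else 0)
          (Q * L) j = 0 := by
  set u : Fin p → ℝ := fun r : Fin p => if p - k ≤ (r : ℕ) then lam r * w r.rev else 0 with hu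
  have key : ∀ j : Fin m, (Eminus m l * C0mat Q lam mu * Eplus p k).mulVec w j
      = (if (j : ℕ) < l then 0 else -(mu j)⁻¹) * Matrix.vecMul u Q j := by
    intro j
    rw [Matrix.mulVec, dotProduct, Matrix.vecMul, dotProduct, Finset.mul_sum]
    apply Fintype.sum_equiv (Fin.revPerm (n := p))
    intro i
    rw [entry_formula]
    have hcond : (p - k ≤ ((Fin.revPerm i : Fin p) : ℕ)) ↔ (i : ℕ) < k := by
      simp only [Fin.revPerm_apply, Fin.val_rev]
      have := i.isLt
      omega
    have hrr : (Fin.revPerm i).rev = i := Fin.rev_rev i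
    simp only [Fin.revPerm_apply] at hcond hrr ⊢
    simp only [hu]
    by_cases h2 : (i : ℕ) < k
    · rw [if_pos (hcond.mpr h2), if_pos h2, hrr]
      split_ifs <;> ring
    · rw [if_neg (fun h => h2 (hcond.mp h)), if_neg h2]
      split_ifs <;> ring
  have step1 : (Eminus m l * C0mat Q lam mu * Eplus p k).mulVec w = 0 ↔
      ∀ j : Fin m, l ≤ (j : ℕ) → Matrix.vecMul u Q j = 0 := by
    rw [funext_iff]
    constructor
    · intro h j hj
      have h' := h j
      rw [key, Pi.zero_apply, if_neg (by omega)] at h'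
      rcases mul_eq_zero.mp h' with h'' | h''
      · exact absurd h'' (by
          have := (hmu j).ne'
          simp [this])
      · exact h''
    · intro h j
      rw [key, Pi.zero_apply]
      by_cases hj : (j : ℕ) < l
      · rw [if_pos hj, zero_mul]
      · rw [if_neg hj, h j (by omega), mul_zero]
  rw [step1, ← vecMul_tri_zero_iff hL (Matrix.vecMul u Q) l]
  simp only [Matrix.vecMul_vecMul]

/-- (a) For `ℓ ∈ {1,…,ℓ(k)-1}`, `ker (E⁻_ℓ C₀ E⁺_k) = ker (C₀ E⁺_k)`, and
(b) `ker (E⁻_{ℓ(k)-1} C₀ E⁺_k)` is a proper subset of `ker (E⁻_{ℓ(k)} C₀ E⁺_k)`. -/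
theorem kernel_stabilizes_until_ellOf {p m : ℕ} (hp : 1 ≤ p) (hm : 1 ≤ m)
    (Q : Matrix (Fin p) (Fin m) ℝ) (hQ : Q.rank = p)
    (L : Matrix (Fin m) (Fin m) ℝ) (hL : IsLowerUnitriangular L)
    (c : Fin p → Fin m) (hc : IsCanonicalFormWith (Q * L) c)
    (lam : Fin p → ℝ) (hlam : ∀ i, lam i < 0)
    (mu : Fin m → ℝ) (hmu : ∀ j, 0 < mu j)
    (k : ℕ) (hk1 : 1 ≤ k) (hk2 : k ≤ p) :
    (∀ l : ℕ, 1 ≤ l → l < ellOf c k →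
      {w : Fin p → ℝ | (Eminus m l * C0mat Q lam mu * Eplus p k).mulVec w = 0} =
        {w : Fin p → ℝ | (C0mat Q lam mu * Eplus p k).mulVec w = 0}) ∧
    {w : Fin p → ℝ | (Eminus m (ellOf c k - 1) * C0mat Q lam mu * Eplus p k).mulVec w = 0} ⊂
      {w : Fin p → ℝ | (Eminus m (ellOf c k) * C0mat Q lam mu * Eplus p k).mulVec w = 0} := by
  have hne : {n : ℕ | ∃ r : Fin p, p - k ≤ (r : ℕ) ∧ (c r : ℕ) + 1 = n}.Nonempty :=
    ⟨(c ⟨p - 1, by omega⟩ : ℕ) + 1, ⟨⟨p - 1, by omega⟩, by simp; omega, rfl⟩⟩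
  have hmem0 : ∃ r : Fin p, p - k ≤ (r : ℕ) ∧ (c r : ℕ) + 1 = ellOf c k := Nat.sInf_mem hne
  obtain ⟨r0, hr0S, hr0⟩ := hmem0
  have hle : ∀ r : Fin p, p - k ≤ (r : ℕ) → ellOf c k ≤ (c r : ℕ) + 1 :=
    fun r hr => Nat.sInf_le ⟨r, hr, rfl⟩
  have hsupp : ∀ (u : Fin p → ℝ), (∀ r : Fin p, ¬ (p - k ≤ (r : ℕ)) → u r = 0) →
      ∀ j : Fin m, (∀ r : Fin p, p - k ≤ (r : ℕ) → j ≠ c r) →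
        Matrix.vecMul u (Q * L) j = 0 := by
    intro u hu j hj
    rw [Matrix.vecMul, dotProduct]
    apply Finset.sum_eq_zero
    intro r _
    by_cases hr : p - k ≤ (r : ℕ)
    · rw [canonical_row_support hc r j
        (fun r' hr' => hj r' (le_trans hr hr')), mul_zero]
    · rw [hu r hr, zero_mul]
  constructor
  · -- part (a)
    intro l hla hlb
    ext w
    simp only [Set.mem_setOf_eq]
    rw [kernel_iff Q L hL lam mu hmu k l hk2 w]
    have hR : C0mat Q lam mu * Eplus p k = Eminus m 0 * C0mat Q lam mu * Eplus p k := by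
      rw [eminus_zero, Matrix.one_mul]
    rw [hR, kernel_iff Q L hL lam mu hmu k 0 hk2 w]
    constructor
    · intro h j _
      by_cases hj : l ≤ (j : ℕ)
      · exact h j hj
      · apply hsupp _ _ j
        · intro r hr heq
          have h1 := hle r hr
          have h2 : (j : ℕ) = (c r : ℕ) := by rw [heq]
          omega
        · intro r hr
          rw [if_neg hr]
    · intro h j _
      exact h j (Nat.zero_le _)
  · -- part (b)
    set e := ellOf c k with he
    have he1 : 1 ≤ e := by omega
    constructor
    · intro w hw
      simp only [Set.mem_setOf_eq] at hw ⊢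
      rw [kernel_iff Q L hL lam mu hmu k _ hk2 w] at hw ⊢
      intro j hj
      exact hw j (by omega)
    · -- strictness
      intro hsub
      -- build the separating matrix A and vector u
      set Q0 : Matrix (Fin p) (Fin m) ℝ := Q * L with hQ0
      set A : Matrix (Fin p) (Fin p) ℝ :=
        Matrix.of fun a b => if p - k ≤ (a : ℕ) ∧ p - k ≤ (b : ℕ) then Q0 a (c b)
          else if a = b then 1 else 0 with hA
      have htriA : ∀ a b : Fin p, b < a → A a b = 0 := by
        intro a b hba
        show (if p - k ≤ (a : ℕ) ∧ p - k ≤ (b : ℕ) then Q0 a (c b)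
          else if a = b then 1 else 0) = 0
        by_cases hr : p - k ≤ (a : ℕ) ∧ p - k ≤ (b : ℕ)
        · rw [if_pos hr]
          obtain ⟨h1, h2, h3⟩ := hc.2 a
          rcases lt_trichotomy (c b) (c a) with hlt | heq | hgt
          · exact h3 (c b) hlt
          · exact absurd (hc.1 heq) (ne_of_lt hba)
          · exact h2 (c b) hgt (fun k' hk' heq' =>
              absurd (hc.1 heq') (by intro h'; subst h'; exact absurd hba (not_lt.mpr hk'.le)))
        · rw [if_neg hr, if_neg (ne_of_gt hba)]
      have hAdiag : ∀ r : Fin p, A r r ≠ 0 := by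
        intro r
        show (if p - k ≤ (r : ℕ) ∧ p - k ≤ (r : ℕ) then Q0 r (c r)
          else if r = r then 1 else 0) ≠ 0
        by_cases hr : p - k ≤ (r : ℕ)
        · rw [if_pos ⟨hr, hr⟩]; exact (hc.2 r).1
        · rw [if_neg (fun h => hr h.1), if_pos rfl]; exact one_ne_zero
      have hdet : IsUnit A.det := by
        have htri : A.BlockTriangular id := by
          intro a b hba
          exact htriA a b hba
        rw [Matrix.det_of_upperTriangular htri, isUnit_iff_ne_zero]
        exact Finset.prod_ne_zero_iff.mpr (fun r _ => hAdiag r)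
      set u : Fin p → ℝ := Matrix.vecMul (Pi.single r0 1 : Fin p → ℝ) A⁻¹ with hudef
      have huA : Matrix.vecMul u A = (Pi.single r0 1 : Fin p → ℝ) := by
        rw [hudef, Matrix.vecMul_vecMul, Matrix.nonsing_inv_mul A hdet, Matrix.vecMul_one]
      have hu0 : ∀ r : Fin p, ¬ p - k ≤ (r : ℕ) → u r = 0 := by
        intro r hr
        have h1 : Matrix.vecMul u A r = (Pi.single r0 1 : Fin p → ℝ) r := congrFun huA r
        rw [Matrix.vecMul, dotProduct, Finset.sum_eq_single r] at h1
        · have hArr : A r r = 1 := by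
            show (if p - k ≤ (r : ℕ) ∧ p - k ≤ (r : ℕ) then Q0 r (c r)
              else if r = r then 1 else 0) = 1
            rw [if_neg (fun h => hr h.1), if_pos rfl]
          rw [hArr, mul_one] at h1
          rw [h1]
          apply Pi.single_eq_of_ne
          intro heq
          exact hr (heq ▸ hr0S)
        · intro b _ hb
          have hAbr : A b r = 0 := by
            show (if p - k ≤ (b : ℕ) ∧ p - k ≤ (r : ℕ) then Q0 b (c r)
              else if b = r then 1 else 0) = 0
            rw [if_neg (fun h => hr h.2), if_neg hb]
          rw [hAbr, mul_zero]
        · intro hr'; exact absurd (Finset.mem_univ r) hr'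
      have hyc : ∀ r' : Fin p, p - k ≤ (r' : ℕ) →
          Matrix.vecMul u Q0 (c r') = (Pi.single r0 1 : Fin p → ℝ) r' := by
        intro r' hr'
        rw [← congrFun huA r', Matrix.vecMul, Matrix.vecMul, dotProduct,
          dotProduct]
        apply Finset.sum_congr rfl
        intro r _
        by_cases hr : p - k ≤ (r : ℕ)
        · have : A r r' = Q0 r (c r') := by
            show (if p - k ≤ (r : ℕ) ∧ p - k ≤ (r' : ℕ) then Q0 r (c r')
              else if r = r' then 1 else 0) = _
            rw [if_pos ⟨hr, hr'⟩]
          rw [this]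
        · rw [hu0 r hr, zero_mul, zero_mul]
      set w : Fin p → ℝ := fun i : Fin p => if (i : ℕ) < k then u i.rev / lam i.rev else 0
        with hwdef
      have huw : (fun r : Fin p => if p - k ≤ (r : ℕ) then lam r * w r.rev else 0) = u := by
        funext r
        by_cases hr : p - k ≤ (r : ℕ)
        · rw [if_pos hr]
          have hrk : ((r.rev : Fin p) : ℕ) < k := by
            rw [Fin.val_rev]
            have := r.isLt
            omega
          rw [hwdef]
          simp only []
          rw [if_pos hrk, Fin.rev_rev, mul_comm, div_mul_cancel₀ _ (ne_of_lt (hlam r))]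
        · rw [if_neg hr, hu0 r hr]
      have hwmem : w ∈ {w : Fin p → ℝ |
          (Eminus m e * C0mat Q lam mu * Eplus p k).mulVec w = 0} := by
        simp only [Set.mem_setOf_eq]
        rw [kernel_iff Q L hL lam mu hmu k e hk2 w, ← hQ0]
        intro j hj
        rw [huw]
        by_cases hex : ∃ r : Fin p, p - k ≤ (r : ℕ) ∧ j = c r
        · obtain ⟨r', hr', rfl⟩ := hex
          rw [hyc r' hr']
          apply Pi.single_eq_of_ne
          intro heq
          subst heq
          omega
        · exact hsupp u hu0 j (fun r hr heq => hex ⟨r, hr, heq⟩)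
      have hwnotmem : w ∉ {w : Fin p → ℝ |
          (Eminus m (e - 1) * C0mat Q lam mu * Eplus p k).mulVec w = 0} := by
        simp only [Set.mem_setOf_eq]
        rw [kernel_iff Q L hL lam mu hmu k (e - 1) hk2 w, ← hQ0]
        intro hcontra
        have h1 := hcontra (c r0) (by omega)
        rw [huw, hyc r0 hr0S, Pi.single_eq_same] at h1
        exact one_ne_zero h1
      exact hwnotmem (hsub hwmem)
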